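/- Let t ↦ K(t) and t ↦ G(t) be differentiable maps from ℝ into the real symmetric n×n matrices, and let λ : ℝ → ℝ and φ : ℝ → ℝⁿ be differentiable and satisfy, for all t, the generalized eigenvalue equation (K(t) + λ(t)G(t))φ(t) = 0 together with the normalization φ(t)ᵀG(t)φ(t) = −1. Then for all t, λ'(t) = φ(t)ᵀ(K'(t) + λ(t)G'(t))φ(t). -/

import Mathlib

open Matrix

/-- If `t ↦ K(t)`, `t ↦ G(t)` are differentiable families of real
symmetric matrices (entrywise derivatives `K'`, `G'`) and differentiable `λ(t)`,
`φ(t)` satisfy `(K(t) + λ(t)G(t))φ(t) = 0` with normalization `φ(t)ᵀG(t)φ(t) = −1`,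
then `λ'(t) = φ(t)ᵀ(K'(t) + λ(t)G'(t))φ(t)` for all `t`. -/
theorem blf_sensitivity {n : ℕ}
    (K K' G G' : ℝ → Matrix (Fin n) (Fin n) ℝ)
    (hKsymm : ∀ t, (K t).IsSymm) (hGsymm : ∀ t, (G t).IsSymm)
    (hK' : ∀ t i j, HasDerivAt (fun s => K s i j) (K' t i j) t)
    (hG' : ∀ t i j, HasDerivAt (fun s => G s i j) (G' t i j) t)
    (lam lam' : ℝ → ℝ) (φ φ' : ℝ → Fin n → ℝ)
    (hlam : ∀ t, HasDerivAt lam (lam' t) t)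
    (hφ : ∀ t i, HasDerivAt (fun s => φ s i) (φ' t i) t)
    (heig : ∀ t, (K t + lam t • G t).mulVec (φ t) = 0)
    (hnorm : ∀ t, φ t ⬝ᵥ (G t).mulVec (φ t) = -1) :
    ∀ t, lam' t = φ t ⬝ᵥ (K' t + lam t • G' t).mulVec (φ t) := by
  intro t
  set A := K t + lam t • G t with hA
  have hAφ : A.mulVec (φ t) = 0 := heig t
  have hAsymm : A.IsSymm := by
    unfold Matrix.IsSymm
    rw [hA, Matrix.transpose_add, Matrix.transpose_smul, (hKsymm t), (hGsymm t)]
  -- the function f s = φ s ⬝ᵥ (K s + lam s • G s).mulVec (φ s) is constantly 0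
  have hrepr : ∀ s, φ s ⬝ᵥ (K s + lam s • G s).mulVec (φ s)
      = ∑ i, ∑ j, φ s i * ((K s i j + lam s * G s i j) * φ s j) := by
    intro s
    simp [dotProduct, mulVec, Finset.mul_sum, Matrix.add_apply, Matrix.smul_apply,
      smul_eq_mul]
  have hf : HasDerivAt (fun s => ∑ i, ∑ j, φ s i * ((K s i j + lam s * G s i j) * φ s j))
      (∑ i, ∑ j, (φ' t i * ((K t i j + lam t * G t i j) * φ t j)
        + φ t i * ((K' t i j + (lam' t * G t i j + lam t * G' t i j)) * φ t j
          + (K t i j + lam t * G t i j) * φ' t j))) t := by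
    apply HasDerivAt.fun_sum; intro i _
    apply HasDerivAt.fun_sum; intro j _
    exact (hφ t i).mul (((hK' t i j).add ((hlam t).mul (hG' t i j))).mul (hφ t j))
  have hzero : (fun s => ∑ i, ∑ j, φ s i * ((K s i j + lam s * G s i j) * φ s j))
      = fun _ => (0:ℝ) := by
    funext s
    rw [← hrepr s, heig s]
    simp
  have hD : (∑ i, ∑ j, (φ' t i * ((K t i j + lam t * G t i j) * φ t j)
        + φ t i * ((K' t i j + (lam' t * G t i j + lam t * G' t i j)) * φ t j
          + (K t i j + lam t * G t i j) * φ' t j))) = 0 := by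
    have h0 : HasDerivAt (fun s => ∑ i, ∑ j, φ s i * ((K s i j + lam s * G s i j) * φ s j))
        0 t := by
      rw [hzero]; exact hasDerivAt_const t 0
    exact hf.unique h0
  -- split the sum into three pieces
  have hsplit : (∑ i, ∑ j, (φ' t i * ((K t i j + lam t * G t i j) * φ t j)
        + φ t i * ((K' t i j + (lam' t * G t i j + lam t * G' t i j)) * φ t j
          + (K t i j + lam t * G t i j) * φ' t j)))
      = (∑ i, ∑ j, φ' t i * (A i j * φ t j))
        + ((∑ i, ∑ j, φ t i * ((K' t i j + (lam' t * G t i j + lam t * G' t i j)) * φ t j))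
          + (∑ i, ∑ j, φ t i * (A i j * φ' t j))) := by
    have step : (∑ i, ∑ j, (φ' t i * ((K t i j + lam t * G t i j) * φ t j)
        + φ t i * ((K' t i j + (lam' t * G t i j + lam t * G' t i j)) * φ t j
          + (K t i j + lam t * G t i j) * φ' t j)))
        = ∑ i, ∑ j, (φ' t i * (A i j * φ t j)
          + (φ t i * ((K' t i j + (lam' t * G t i j + lam t * G' t i j)) * φ t j)
            + φ t i * (A i j * φ' t j))) := by
      apply Finset.sum_congr rfl; intro i _
      apply Finset.sum_congr rfl; intro j _
      simp only [hA, Matrix.add_apply, Matrix.smul_apply, smul_eq_mul]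
      ring
    rw [step]
    simp [Finset.sum_add_distrib]
  -- piece 1 is zero
  have e1 : (∑ i, ∑ j, φ' t i * (A i j * φ t j)) = 0 := by
    have : (∑ i, ∑ j, φ' t i * (A i j * φ t j)) = φ' t ⬝ᵥ A.mulVec (φ t) := by
      simp [dotProduct, mulVec, Finset.mul_sum]
    rw [this, hAφ]; simp
  -- piece 3 is zero by symmetry
  have e3 : (∑ i, ∑ j, φ t i * (A i j * φ' t j)) = 0 := by
    rw [Finset.sum_comm]
    have : ∀ j, (∑ i, φ t i * (A i j * φ' t j)) = (A.mulVec (φ t)) j * φ' t j := by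
      intro j
      simp only [mulVec, dotProduct, Finset.sum_mul]
      apply Finset.sum_congr rfl; intro i _
      have hsy : A j i = A i j := congrFun (congrFun hAsymm i) j
      rw [hsy]; ring
    simp only [this, hAφ, Pi.zero_apply, zero_mul, Finset.sum_const_zero]
  -- normalization
  have hn : (∑ i, ∑ j, φ t i * (G t i j * φ t j)) = -1 := by
    have := hnorm t
    simpa [dotProduct, mulVec, Finset.mul_sum] using this
  -- middle piece
  have e2 : (∑ i, ∑ j, φ t i * ((K' t i j + (lam' t * G t i j + lam t * G' t i j)) * φ t j))
      = (φ t ⬝ᵥ (K' t + lam t • G' t).mulVec (φ t)) + lam' t * (∑ i, ∑ j, φ t i * (G t i j * φ t j)) := by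
    simp only [dotProduct, mulVec, Matrix.add_apply, Matrix.smul_apply, smul_eq_mul,
      Finset.mul_sum, ← Finset.sum_add_distrib]
    apply Finset.sum_congr rfl; intro i _
    apply Finset.sum_congr rfl; intro j _
    ring
  rw [hsplit, e1, e3, e2, hn] at hD
  linarith
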